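/- arXiv:1912.12664 — 2 statements merged into one kernel-verified Lean document; each statement's English description precedes it below -/
import Mathlib

section
/- On R^4 with coordinates (x,y,z,v), the bivector P with components P^{xy} = x²y + y²z, P^{xz} = x²z + yz², P^{xv} = 2xyz + 2yzv, P^{yz} = 0, P^{yv} = y²z + yv², P^{zv} = yz² + zv² (and skew-symmetric extension) is a Poisson bivector: its Schouten bracket [[P,P]] vanishes identically, i.e. the bracket {f,g} = sum P^{ij} ∂_i f ∂_j g satisfies the Jacobi identity. -/
open scoped BigOperators

/-- Partial derivative `∂_k f` of a scalar function on `ℝ^r`. -/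
noncomputable def pd {r : ℕ} (k : Fin r) (f : (Fin r → ℝ) → ℝ) : (Fin r → ℝ) → ℝ :=
  fun x => fderiv ℝ f x (Pi.single k 1)

/-- Components of the Schouten bracket (Lie derivative) `[[V,P]]` of a vector field `V`
with a bivector `P`. -/
noncomputable def lieD {r : ℕ} (V : Fin r → (Fin r → ℝ) → ℝ)
    (P : Fin r → Fin r → (Fin r → ℝ) → ℝ) (i j : Fin r) (x : Fin r → ℝ) : ℝ :=
  ∑ k, (V k x * pd k (P i j) x - P k j x * pd k (V i) x - P i k x * pd k (V j) x)

/-- The cubic Poisson bivector on `ℝ^4 ≅ gl(2,ℝ)` associated with the `R`-matrix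
`((x,y),(z,v)) ↦ ((0,y),(-z,0))`; coordinates `(x,y,z,v) = (w 0, w 1, w 2, w 3)`. -/
noncomputable def Pa : Fin 4 → Fin 4 → (Fin 4 → ℝ) → ℝ := fun i j w =>
  let x := w 0; let y := w 1; let z := w 2; let v := w 3
  !![0,                          x^2*y + y^2*z,        x^2*z + y*z^2,        2*x*y*z + 2*y*z*v;
     -(x^2*y + y^2*z),           0,                    0,                    y^2*z + y*v^2;
     -(x^2*z + y*z^2),           0,                    0,                    y*z^2 + z*v^2;
     -(2*x*y*z + 2*y*z*v),       -(y^2*z + y*v^2),     -(y*z^2 + z*v^2),     0] i j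

private lemma pdc {f g : (Fin 4 → ℝ) → ℝ} {L : (Fin 4 → ℝ) →L[ℝ] ℝ} (l : Fin 4)
    (x : Fin 4 → ℝ) (hfg : f = g) (h : HasFDerivAt g L x) : pd l f x = L (Pi.single l 1) := by
  rw [pd, hfg, h.fderiv]

private lemma pd1 (l : Fin 4) (x : Fin 4 → ℝ) :
    pd l (fun w => w 0 ^ 2 * w 1 + w 1 ^ 2 * w 2) x =
      2*x 0*x 1 * (Pi.single l 1 : Fin 4 → ℝ) 0
      + (x 0^2 + 2*x 1*x 2) * (Pi.single l 1 : Fin 4 → ℝ) 1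
      + x 1^2 * (Pi.single l 1 : Fin 4 → ℝ) 2 := by
  have h0 := hasFDerivAt_apply (𝕜 := ℝ) (0 : Fin 4) x
  have h1 := hasFDerivAt_apply (𝕜 := ℝ) (1 : Fin 4) x
  have h2 := hasFDerivAt_apply (𝕜 := ℝ) (2 : Fin 4) x
  rw [pdc l x (g := fun w => w 0 * w 0 * w 1 + w 1 * w 1 * w 2) (by funext w; ring)
    (((h0.mul h0).mul h1).add ((h1.mul h1).mul h2))]
  simp [smul_eq_mul]; ring

private lemma pd2 (l : Fin 4) (x : Fin 4 → ℝ) :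
    pd l (fun w => w 0 ^ 2 * w 2 + w 1 * w 2 ^ 2) x =
      2*x 0*x 2 * (Pi.single l 1 : Fin 4 → ℝ) 0
      + x 2^2 * (Pi.single l 1 : Fin 4 → ℝ) 1
      + (x 0^2 + 2*x 1*x 2) * (Pi.single l 1 : Fin 4 → ℝ) 2 := by
  have h0 := hasFDerivAt_apply (𝕜 := ℝ) (0 : Fin 4) x
  have h1 := hasFDerivAt_apply (𝕜 := ℝ) (1 : Fin 4) x
  have h2 := hasFDerivAt_apply (𝕜 := ℝ) (2 : Fin 4) x
  rw [pdc l x (g := fun w => w 0 * w 0 * w 2 + w 1 * w 2 * w 2) (by funext w; ring)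
    (((h0.mul h0).mul h2).add (((h1.mul h2)).mul h2))]
  simp [smul_eq_mul]; ring

private lemma pd3 (l : Fin 4) (x : Fin 4 → ℝ) :
    pd l (fun w => 2 * w 0 * w 1 * w 2 + 2 * w 1 * w 2 * w 3) x =
      2*x 1*x 2 * (Pi.single l 1 : Fin 4 → ℝ) 0
      + (2*x 0*x 2 + 2*x 2*x 3) * (Pi.single l 1 : Fin 4 → ℝ) 1
      + (2*x 0*x 1 + 2*x 1*x 3) * (Pi.single l 1 : Fin 4 → ℝ) 2
      + 2*x 1*x 2 * (Pi.single l 1 : Fin 4 → ℝ) 3 := by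
  have h0 := hasFDerivAt_apply (𝕜 := ℝ) (0 : Fin 4) x
  have h1 := hasFDerivAt_apply (𝕜 := ℝ) (1 : Fin 4) x
  have h2 := hasFDerivAt_apply (𝕜 := ℝ) (2 : Fin 4) x
  have h3 := hasFDerivAt_apply (𝕜 := ℝ) (3 : Fin 4) x
  rw [pdc l x (g := fun w => (w 0 * w 1 * w 2 + w 0 * w 1 * w 2) + (w 1 * w 2 * w 3 + w 1 * w 2 * w 3))
    (by funext w; ring)
    ((((h0.mul h1).mul h2).add ((h0.mul h1).mul h2)).add
      (((h1.mul h2).mul h3).add ((h1.mul h2).mul h3)))]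
  simp [smul_eq_mul]; ring

private lemma pd4 (l : Fin 4) (x : Fin 4 → ℝ) :
    pd l (fun w => w 1 ^ 2 * w 2 + w 1 * w 3 ^ 2) x =
      (2*x 1*x 2 + x 3^2) * (Pi.single l 1 : Fin 4 → ℝ) 1
      + x 1^2 * (Pi.single l 1 : Fin 4 → ℝ) 2
      + 2*x 1*x 3 * (Pi.single l 1 : Fin 4 → ℝ) 3 := by
  have h1 := hasFDerivAt_apply (𝕜 := ℝ) (1 : Fin 4) x
  have h2 := hasFDerivAt_apply (𝕜 := ℝ) (2 : Fin 4) x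
  have h3 := hasFDerivAt_apply (𝕜 := ℝ) (3 : Fin 4) x
  rw [pdc l x (g := fun w => w 1 * w 1 * w 2 + w 1 * w 3 * w 3) (by funext w; ring)
    (((h1.mul h1).mul h2).add ((h1.mul h3).mul h3))]
  simp [smul_eq_mul]; ring

private lemma pd5 (l : Fin 4) (x : Fin 4 → ℝ) :
    pd l (fun w => w 1 * w 2 ^ 2 + w 2 * w 3 ^ 2) x =
      x 2^2 * (Pi.single l 1 : Fin 4 → ℝ) 1
      + (2*x 1*x 2 + x 3^2) * (Pi.single l 1 : Fin 4 → ℝ) 2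
      + 2*x 2*x 3 * (Pi.single l 1 : Fin 4 → ℝ) 3 := by
  have h1 := hasFDerivAt_apply (𝕜 := ℝ) (1 : Fin 4) x
  have h2 := hasFDerivAt_apply (𝕜 := ℝ) (2 : Fin 4) x
  have h3 := hasFDerivAt_apply (𝕜 := ℝ) (3 : Fin 4) x
  rw [pdc l x (g := fun w => w 1 * w 2 * w 2 + w 2 * w 3 * w 3) (by funext w; ring)
    (((h1.mul h2).mul h2).add ((h2.mul h3).mul h3))]
  simp [smul_eq_mul]; ring

private lemma pd_neg (l : Fin 4) (x : Fin 4 → ℝ) (f : (Fin 4 → ℝ) → ℝ) :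
    pd l (fun w => -(f w)) x = -(pd l f x) := by
  simp [pd, fderiv_neg]

private lemma pd_zero (l : Fin 4) (x : Fin 4 → ℝ) :
    pd l (fun _ : Fin 4 → ℝ => (0:ℝ)) x = 0 := by
  simp [pd]

private lemma Pa_def : Pa = fun i j w =>
  !![0,                          w 0^2*w 1 + w 1^2*w 2,        w 0^2*w 2 + w 1*w 2^2,        2*w 0*w 1*w 2 + 2*w 1*w 2*w 3;
     -(w 0^2*w 1 + w 1^2*w 2),           0,                    0,                    w 1^2*w 2 + w 1*w 3^2;
     -(w 0^2*w 2 + w 1*w 2^2),           0,                    0,                    w 1*w 2^2 + w 2*w 3^2;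
     -(2*w 0*w 1*w 2 + 2*w 1*w 2*w 3),       -(w 1^2*w 2 + w 1*w 3^2),     -(w 1*w 2^2 + w 2*w 3^2),     0] i j := rfl


private lemma fm0 (h : (0:ℕ) < 4) : (⟨0, h⟩ : Fin 4) = 0 := rfl
private lemma fm1 (h : (1:ℕ) < 4) : (⟨1, h⟩ : Fin 4) = 1 := rfl
private lemma fm2 (h : (2:ℕ) < 4) : (⟨2, h⟩ : Fin 4) = 2 := rfl
private lemma fm3 (h : (3:ℕ) < 4) : (⟨3, h⟩ : Fin 4) = 3 := rfl

set_option maxHeartbeats 2000000 in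
set_option maxHeartbeats 1000000 in
/-- the bivector `Pa` is Poisson: its Schouten bracket with itself
(the Jacobiator) vanishes identically. -/
theorem statement6 :
    ∀ (i j k : Fin 4) (x : Fin 4 → ℝ),
      ∑ l, (Pa l i x * pd l (Pa j k) x + Pa l j x * pd l (Pa k i) x
             + Pa l k x * pd l (Pa i j) x) = 0 := by
  intro i j k x
  fin_cases i <;> fin_cases j <;> fin_cases k <;>
  · simp only [fm0, fm1, fm2, fm3, Pa_def, Fin.sum_univ_four, Matrix.cons_val', Matrix.cons_val_zero,
      Matrix.cons_val_one, Matrix.cons_val_succ, Matrix.head_cons, Matrix.cons_val_two,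
      Matrix.cons_val_three, Matrix.empty_val', Matrix.cons_val_fin_one, Matrix.vecTail,
      Matrix.vecHead, Matrix.of_apply, Function.comp]
    simp only [pd1, pd2, pd3, pd4, pd5, pd_neg, pd_zero]
    simp (config := { decide := true }) [Pi.single_apply]
    try ring
end

section
/- On R^3 with coordinates x,y,z each of weight 1, let a = (1/3)(x³+y³+z³) and P the Nambu-type Poisson bivector {f,g} = det(∂(a,f,g)/∂(x,y,z)), which has quadratic homogeneous components. Then there exists no vector field V with polynomial coefficients such that [[V,P]] = P. -/
open scoped BigOperators

/-- The Nambu bivector on `ℝ^3` with Casimir `a = (x³+y³+z³)/3` and density `ρ ≡ 1`: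
`P^{xy} = z²`, `P^{yz} = x²`, `P^{zx} = y²`. -/
noncomputable def P13 : Fin 3 → Fin 3 → (Fin 3 → ℝ) → ℝ := fun i j x =>
  !![0,          (x 2)^2,    -(x 1)^2;
     -((x 2)^2), 0,          (x 0)^2;
     (x 1)^2,    -((x 0)^2), 0] i j

open MvPolynomial

noncomputable def Q13 : Fin 3 → Fin 3 → MvPolynomial (Fin 3) ℝ := fun i j =>
  !![0,           X 2 ^ 2,    -(X 1 ^ 2);
     -(X 2 ^ 2),  0,          X 0 ^ 2;
     X 1 ^ 2,     -(X 0 ^ 2), 0] i j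

lemma hasFDerivAt_mveval {r : ℕ} (p : MvPolynomial (Fin r) ℝ) (x : Fin r → ℝ) :
    HasFDerivAt (fun y : Fin r → ℝ => eval y p)
      (∑ k, eval x (pderiv k p) • ContinuousLinearMap.proj (R := ℝ) (φ := fun _ : Fin r => ℝ) k) x := by
  induction p using MvPolynomial.induction_on with
  | C a => simpa using hasFDerivAt_const a x
  | add p q hp hq =>
      have := hp.add hq
      convert this using 1
      · rfl
      · rfl
      · rfl
      · rfl
      · rfl
      · ext y; simp
      · ext v
        simp [add_smul, Finset.sum_add_distrib, add_mul]
  | mul_X p n hp =>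
      have hX : HasFDerivAt (fun y : Fin r → ℝ => y n)
          (ContinuousLinearMap.proj (R := ℝ) (φ := fun _ : Fin r => ℝ) n) x :=
        hasFDerivAt_apply n x
      have := hp.mul hX
      convert this using 1
      · rfl
      · rfl
      · rfl
      · rfl
      · rfl
      · ext y; simp
      · ext v
        simp [pderiv_mul, pderiv_X, Pi.single_apply, add_mul, mul_add, Finset.sum_add_distrib,
          Finset.mul_sum, apply_ite (eval x), mul_ite, ite_mul, mul_comm, mul_left_comm, mul_assoc,
          Finset.sum_ite_eq, Finset.sum_ite_eq', add_comm]

lemma pd_eval {r : ℕ} (k : Fin r) (p : MvPolynomial (Fin r) ℝ) (x : Fin r → ℝ) :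
    pd k (fun y => eval y p) x = eval x (pderiv k p) := by
  rw [pd, (hasFDerivAt_mveval p x).fderiv]
  simp [ContinuousLinearMap.proj_apply, Pi.single_apply, Finset.sum_ite_eq, mul_ite]

lemma coeff_sq_mul_ne {i j : Fin 3} (hij : i ≠ j) (p : MvPolynomial (Fin 3) ℝ) :
    coeff (Finsupp.single j 2) (X i ^ 2 * p) = 0 := by
  rw [X_pow_eq_monomial, coeff_monomial_mul', if_neg]
  simp [Finsupp.single_le_iff, Finsupp.single_apply, (Ne.symm hij)]

lemma coeff_sq_mul_self (i : Fin 3) (p : MvPolynomial (Fin 3) ℝ) :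
    coeff (Finsupp.single i 2) (X i ^ 2 * p) = coeff 0 p := by
  rw [X_pow_eq_monomial, coeff_monomial_mul', if_pos le_rfl]
  simp

lemma coeff_mul_two_X (i : Fin 3) (p : MvPolynomial (Fin 3) ℝ) :
    coeff (Finsupp.single i 2) (p * (2 * X i)) = 2 * coeff (Finsupp.single i 1) p := by
  rw [show p * (2 * X i) = MvPolynomial.C (2:ℝ) * (p * X i) by rw [map_ofNat]; ring]
  rw [coeff_C_mul, coeff_mul_X']
  have h1 : (Finsupp.single i 2 - Finsupp.single i 1 : Fin 3 →₀ ℕ) = Finsupp.single i 1 := by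
    rw [← Finsupp.single_tsub]
  rw [if_pos (by simp [Finsupp.mem_support_iff]), h1]

lemma coeff_zero_pderiv {r : ℕ} (i : Fin r) (p : MvPolynomial (Fin r) ℝ) :
    coeff 0 (pderiv i p) = coeff (Finsupp.single i 1) p := by
  induction p using MvPolynomial.induction_on' with
  | add p q hp hq => simp [hp, hq]
  | monomial s a =>
      rw [pderiv_monomial]
      simp only [coeff_monomial]
      by_cases h : s = Finsupp.single i 1
      · subst h; simp
      · rw [if_neg h]
        by_cases h0 : s i = 0
        · simp [h0]
        · rw [if_neg]
          intro he
          apply h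
          ext j
          have hj := congrArg (fun f => f j) he
          simp only [Finsupp.tsub_apply, Finsupp.coe_zero, Pi.zero_apply,
            Finsupp.single_apply] at hj ⊢
          by_cases hji : i = j
          · subst hji; simp at hj ⊢; omega
          · simp [hji] at hj ⊢; omega

/-- there is no vector field `V` with polynomial coefficients such that
`[[V,P]] = P` for the Nambu bivector `P` with Casimir `a = (x³+y³+z³)/3`. -/
theorem statement13 :
    ¬ ∃ V : Fin 3 → MvPolynomial (Fin 3) ℝ,
        ∀ i j x, lieD (fun k x => MvPolynomial.eval x (V k)) P13 i j x = P13 i j x := by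
  rintro ⟨V, h⟩
  have hP : ∀ i j, P13 i j = fun x => eval x (Q13 i j) := by
    intro i j
    funext x
    fin_cases i <;> fin_cases j <;> simp [P13, Q13]
  have E : ∀ i j, (∑ k, (V k * pderiv k (Q13 i j) - Q13 k j * pderiv k (V i)
      - Q13 i k * pderiv k (V j))) = Q13 i j := by
    intro i j
    apply MvPolynomial.funext
    intro x
    have hx := h i j x
    simp only [lieD, hP, pd_eval] at hx
    simpa [map_sum, map_sub, map_mul] using hx
  have e2 := E 1 2
  simp [Fin.sum_univ_three, Q13] at e2
  have e3 := E 2 0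
  simp [Fin.sum_univ_three, Q13] at e3
  have e1 := E 0 1
  simp [Fin.sum_univ_three, Q13] at e1
  have c2 := congrArg (coeff (Finsupp.single 0 2)) e2
  have c3 := congrArg (coeff (Finsupp.single 1 2)) e3
  have c1 := congrArg (coeff (Finsupp.single 2 2)) e1
  simp only [coeff_sub, coeff_add, coeff_neg, coeff_mul_two_X, coeff_sq_mul_self,
    coeff_sq_mul_ne (show (1:Fin 3) ≠ 0 by decide), coeff_sq_mul_ne (show (2:Fin 3) ≠ 0 by decide),
    coeff_sq_mul_ne (show (0:Fin 3) ≠ 1 by decide), coeff_sq_mul_ne (show (2:Fin 3) ≠ 1 by decide),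
    coeff_sq_mul_ne (show (0:Fin 3) ≠ 2 by decide), coeff_sq_mul_ne (show (1:Fin 3) ≠ 2 by decide),
    coeff_zero_pderiv] at c1 c2 c3
  rw [X_pow_eq_monomial, coeff_monomial, if_pos rfl] at c1 c2 c3

  linarith
end
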